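/- Uniform convergence on compact sets: Suppose the rate-function family satisfies the growth conditions (G1) and (G2), I_θ(0) = 0 for all θ ∈ Θ, and J : Θ → ℝ is uniformly continuous on bounded subsets of Θ. Fix r > 0 and δ > 0. Then J̄^δ_{T,r} → J and J̲^δ_{T,r} → J uniformly on compact subsets of Θ: for every compact Θ0 ⊆ Θ, lim_{T→∞} sup_{θ' ∈ Θ0} |J̄^δ_{T,r}(θ') − J(θ')| = 0 and lim_{T→∞} sup_{θ' ∈ Θ0} |J̲^δ_{T,r}(θ') − J(θ')| = 0. -/

import Mathlib

set_option autoImplicit false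

open Filter Topology Metric Set MeasureTheory

noncomputable section

variable {E : Type*} [NormedAddCommGroup E] [NormedSpace ℝ E]

/-- The sublevel set `S_{θ,r} = {ϑ ∈ E : I_θ(ϑ) ≤ r}` of the rate function. -/
def sublevelSet (I : E → E → ENNReal) (θ : E) (r : ℝ) : Set E :=
  {ϑ : E | I θ ϑ ≤ ENNReal.ofReal r}

/-- The open `δ`-fattening `S^δ_{θ,r}` of the sublevel set, where `S^0_{θ,r} = S_{θ,r}`;
for `δ > 0` it is the set of points at distance `< δ` from `S_{θ,r}`, i.e. the union of
open balls of radius `δ` around points of `S_{θ,r}`. -/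
def fatSublevel (I : E → E → ENNReal) (θ : E) (r δ : ℝ) : Set E :=
  if δ = 0 then sublevelSet I θ r
  else ⋃ ϑ ∈ sublevelSet I θ r, Metric.ball ϑ δ

/-- Growth condition (G1): for sequences `θ_n ∈ Θ` with `sup_n ‖θ_n‖ < ∞` and
`‖ϑ_n‖ → ∞`, `I_{θ_n}(ϑ_n) → ∞`. -/
def GrowthG1 (Θ : Set E) (I : E → E → ENNReal) : Prop :=
  ∀ θs ϑs : ℕ → E, (∀ n, θs n ∈ Θ) → (∃ C : ℝ, ∀ n, ‖θs n‖ ≤ C) →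
    Tendsto (fun n => ‖ϑs n‖) atTop atTop →
    Tendsto (fun n => I (θs n) (ϑs n)) atTop (nhds ⊤)

/-- Growth condition (G2): for sequences `θ_n ∈ Θ` with `‖θ_n‖ → ∞` and
`‖ϑ_n‖/‖θ_n‖ → ∞`, `limsup_n I_{θ_n}(ϑ_n) = ∞`. -/
def GrowthG2 (Θ : Set E) (I : E → E → ENNReal) : Prop :=
  ∀ θs ϑs : ℕ → E, (∀ n, θs n ∈ Θ) →
    Tendsto (fun n => ‖θs n‖) atTop atTop →
    Tendsto (fun n => ‖ϑs n‖ / ‖θs n‖) atTop atTop →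
    Filter.limsup (fun n => I (θs n) (ϑs n)) atTop = ⊤

/-- The upper confidence bound `J̄^δ_{T,r}(θ') = sup {J(θ) : θ ∈ Θ, a_T (θ' - θ) ∈ S^δ_{θ,r}}`. -/
def upperCB (Θ : Set E) (I : E → E → ENNReal) (J : E → ℝ) (r δ : ℝ) (a : ℝ → ℝ)
    (T : ℝ) (θ' : E) : ℝ :=
  sSup (J '' {θ : E | θ ∈ Θ ∧ a T • (θ' - θ) ∈ fatSublevel I θ r δ})

/-- The lower confidence bound `J̲^δ_{T,r}(θ') = inf {J(θ) : θ ∈ Θ, a_T (θ' - θ) ∈ S^δ_{θ,r}}`. -/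
def lowerCB (Θ : Set E) (I : E → E → ENNReal) (J : E → ℝ) (r δ : ℝ) (a : ℝ → ℝ)
    (T : ℝ) (θ' : E) : ℝ :=
  sInf (J '' {θ : E | θ ∈ Θ ∧ a T • (θ' - θ) ∈ fatSublevel I θ r δ})

/-- Uniform linear bound on sublevel sets, from the growth conditions. -/
lemma exists_uniform_bound (Θ : Set E) (I : E → E → ENNReal)
    (hG1 : GrowthG1 Θ I) (hG2 : GrowthG2 Θ I) (r : ℝ) :
    ∃ K : ℝ, 0 ≤ K ∧ ∀ θ ∈ Θ, ∀ ϑ : E, I θ ϑ ≤ ENNReal.ofReal r → ‖ϑ‖ ≤ K * max ‖θ‖ 1 := by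
  by_contra h
  push_neg at h
  have h' : ∀ n : ℕ, ∃ θ, θ ∈ Θ ∧ ∃ ϑ : E, I θ ϑ ≤ ENNReal.ofReal r ∧
      (n : ℝ) * max ‖θ‖ 1 < ‖ϑ‖ := by
    intro n
    obtain ⟨θ, hθ, ϑ, h1, h2⟩ := h n (Nat.cast_nonneg n)
    exact ⟨θ, hθ, ϑ, h1, h2⟩
  choose θs hθΘ ϑs hIr hlt using h'
  by_cases hc : ∃ m : ℕ, ∃ᶠ n in atTop, ‖θs n‖ ≤ (m : ℝ)
  · obtain ⟨m, hm⟩ := hc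
    obtain ⟨φ, hφ, hbd⟩ := Filter.extraction_of_frequently_atTop hm
    have hten : Tendsto (fun n => ‖ϑs (φ n)‖) atTop atTop := by
      refine tendsto_atTop_mono (f := fun n : ℕ => (n : ℝ)) ?_ tendsto_natCast_atTop_atTop
      intro n
      have h1 : (1 : ℝ) ≤ max ‖θs (φ n)‖ 1 := le_max_right _ _
      have h2 : (n : ℝ) ≤ (φ n : ℝ) := Nat.cast_le.mpr (hφ.le_apply)
      have h3 := hlt (φ n)
      have h4 : (0 : ℝ) ≤ (φ n : ℝ) := Nat.cast_nonneg _
      nlinarith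
    have htop := hG1 (fun n => θs (φ n)) (fun n => ϑs (φ n)) (fun n => hθΘ _)
      ⟨m, fun n => hbd n⟩ hten
    obtain ⟨n, hn⟩ := (htop.eventually (eventually_gt_nhds ENNReal.ofReal_lt_top)).exists
    exact absurd (hIr (φ n)) (not_le.mpr hn)
  · push_neg at hc
    have hev : ∀ m : ℕ, ∀ᶠ n in atTop, (m : ℝ) < ‖θs n‖ := by
      intro m
      have := hc m
      exact this
    have hθtop : Tendsto (fun n => ‖θs n‖) atTop atTop := by
      rw [Filter.tendsto_atTop]
      intro b
      filter_upwards [hev ⌈b⌉₊] with n hn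
      exact le_trans (Nat.le_ceil b) hn.le
    have hratio : Tendsto (fun n => ‖ϑs n‖ / ‖θs n‖) atTop atTop := by
      rw [Filter.tendsto_atTop]
      intro b
      filter_upwards [hev 1, eventually_ge_atTop ⌈b⌉₊] with n h1 h2
      have h1' : (1 : ℝ) < ‖θs n‖ := by exact_mod_cast h1
      have hmax : max ‖θs n‖ 1 = ‖θs n‖ := max_eq_left h1'.le
      have h3 := hlt n
      rw [hmax] at h3
      have hb : b ≤ (n : ℝ) := le_trans (Nat.le_ceil b) (by exact_mod_cast h2)
      refine le_trans hb ?_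
      rw [le_div_iff₀ (by linarith)]
      exact h3.le
    have hls := hG2 θs ϑs hθΘ hθtop hratio
    have hle : Filter.limsup (fun n => I (θs n) (ϑs n)) atTop ≤ ENNReal.ofReal r :=
      Filter.limsup_le_of_le (by isBoundedDefault) (Filter.Eventually.of_forall hIr)
    rw [hls] at hle
    exact ENNReal.ofReal_ne_top (top_le_iff.mp hle)

/-- The real biSup over the empty set is `0`. -/
lemma biSup_empty_real {ι : Type*} [Nonempty ι] (g : ι → ℝ) :
    (⨆ i ∈ (∅ : Set ι), g i) = 0 := by
  have h : ∀ i : ι, (⨆ _ : i ∈ (∅ : Set ι), g i) = (0 : ℝ) := by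
    intro i
    haveI : IsEmpty (i ∈ (∅ : Set ι)) := ⟨fun h => h⟩
    exact Real.iSup_of_isEmpty _
  simp only [h, ciSup_const]

/-- If a nonnegative family is bounded by `ε` on `s`, so is its (real) bounded supremum. -/
lemma abs_biSup_le {ι : Type*} [Nonempty ι] (s : Set ι) (g : ι → ℝ) (ε : ℝ) (hε : 0 ≤ ε)
    (h : ∀ i ∈ s, g i ≤ ε) (h0 : ∀ i ∈ s, 0 ≤ g i) : |⨆ i ∈ s, g i| ≤ ε := by
  have hub : ∀ i, (⨆ _ : i ∈ s, g i) ≤ ε := by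
    intro i
    by_cases hi : i ∈ s
    · haveI : Nonempty (i ∈ s) := ⟨hi⟩
      rw [ciSup_const]
      exact h i hi
    · haveI : IsEmpty (i ∈ s) := ⟨hi⟩
      rw [Real.iSup_of_isEmpty]
      exact hε
  have h0' : ∀ i, 0 ≤ (⨆ _ : i ∈ s, g i) := by
    intro i
    by_cases hi : i ∈ s
    · haveI : Nonempty (i ∈ s) := ⟨hi⟩
      rw [ciSup_const]
      exact h0 i hi
    · haveI : IsEmpty (i ∈ s) := ⟨hi⟩
      rw [Real.iSup_of_isEmpty]
  have hbdd : BddAbove (Set.range fun i => ⨆ _ : i ∈ s, g i) :=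
    ⟨ε, forall_mem_range.mpr hub⟩
  have hle : (⨆ i ∈ s, g i) ≤ ε := ciSup_le hub
  obtain ⟨i⟩ := ‹Nonempty ι›
  have hge : (0 : ℝ) ≤ ⨆ i ∈ s, g i := le_trans (h0' i) (le_ciSup hbdd i)
  rw [abs_of_nonneg hge]
  exact hle

/-- uniform convergence on compact sets: under (G1), (G2), `I_θ(0) = 0`
and uniform continuity of `J` on bounded subsets of `Θ`, for every `r > 0` and `δ > 0`,
`J̄^δ_{T,r} → J` and `J̲^δ_{T,r} → J` uniformly on compact subsets of `Θ`. -/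
theorem stmt11 (Θ : Set E) (hΘ : Θ.Nonempty) (I : E → E → ENNReal) (J : E → ℝ)
    (a : ℝ → ℝ) (hapos : ∀ T > 0, 0 < a T) (hatop : Tendsto a atTop atTop)
    (hG1 : GrowthG1 Θ I) (hG2 : GrowthG2 Θ I)
    (hI0 : ∀ θ ∈ Θ, I θ 0 = 0)
    (hJ : ∀ a0 > (0 : ℝ), ∀ θ0 ∈ Θ, UniformContinuousOn J (Metric.closedBall θ0 a0 ∩ Θ))
    (r δ : ℝ) (hr : 0 < r) (hδ : 0 < δ) :
    ∀ Θ0 : Set E, Θ0 ⊆ Θ → IsCompact Θ0 →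
      Tendsto (fun T => ⨆ θ' ∈ Θ0, |upperCB Θ I J r δ a T θ' - J θ'|) atTop (nhds 0) ∧
      Tendsto (fun T => ⨆ θ' ∈ Θ0, |lowerCB Θ I J r δ a T θ' - J θ'|) atTop (nhds 0) := by
  haveI : Nonempty E := ⟨0⟩
  intro Θ0 hΘ0 hcpt
  rcases Θ0.eq_empty_or_nonempty with hE | ⟨θ0, hθ0⟩
  · subst hE
    constructor <;>
    · refine Tendsto.congr (fun T => ?_) (tendsto_const_nhds (x := (0:ℝ)))
      exact (biSup_empty_real _).symm
  · -- main case: Θ0 nonempty with θ0 ∈ Θ0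
    have hθ0Θ : θ0 ∈ Θ := hΘ0 hθ0
    obtain ⟨K, hK0, hK⟩ := exists_uniform_bound Θ I hG1 hG2 r
    obtain ⟨B, hB⟩ := hcpt.isBounded.subset_closedBall θ0
    have hB0 : 0 ≤ B := le_trans dist_nonneg (hB hθ0)
    set C0 : ℝ := ‖θ0‖ + B + 1 with hC0
    have hC01 : 1 ≤ C0 := by
      have := norm_nonneg θ0
      simp only [hC0]; linarith
    -- key eventual statement
    have key : ∀ ε > (0 : ℝ), ∀ᶠ T in atTop, ∀ θ' ∈ Θ0,
        |upperCB Θ I J r δ a T θ' - J θ'| ≤ ε ∧ |lowerCB Θ I J r δ a T θ' - J θ'| ≤ ε := by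
      intro ε hε
      obtain ⟨η, hη, hηJ⟩ := (uniformContinuousOn_iff.mp
        (hJ (B + 1) (by linarith) θ0 hθ0Θ)) ε hε
      set ρ : ℝ := min η 1 with hρdef
      have hρ : 0 < ρ := lt_min hη one_pos
      set Q : ℝ := K * C0 + δ with hQdef
      have hQ0 : 0 < Q := by
        have : 0 ≤ K * C0 := mul_nonneg hK0 (by linarith)
        simp only [hQdef]; linarith
      set A : ℝ := K + Q / ρ + 1 with hAdef
      have hs0 : 0 ≤ Q / ρ := div_nonneg hQ0.le hρ.le
      have hA0 : 0 < A := by simp only [hAdef]; linarith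
      filter_upwards [hatop.eventually_ge_atTop A] with T hTA
      have haT : 0 < a T := lt_of_lt_of_le hA0 hTA
      -- all feasible θ are ρ-close to θ'
      have hclose : ∀ θ' ∈ Θ0, ∀ θ : E,
          θ ∈ Θ ∧ a T • (θ' - θ) ∈ fatSublevel I θ r δ → ‖θ' - θ‖ < ρ := by
        rintro θ' hθ' θ ⟨hθΘ', hmem⟩
        rw [fatSublevel, if_neg hδ.ne'] at hmem
        rw [mem_iUnion₂] at hmem
        obtain ⟨ϑ, hϑr, hball⟩ := hmem
        rw [mem_ball, dist_eq_norm] at hball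
        set d : ℝ := ‖θ' - θ‖ with hd
        have hd0 : 0 ≤ d := norm_nonneg _
        have hϑK : ‖ϑ‖ ≤ K * max ‖θ‖ 1 := hK θ hθΘ' ϑ hϑr
        have hnorm : a T * d = ‖a T • (θ' - θ)‖ := by
          rw [norm_smul, Real.norm_eq_abs, abs_of_pos haT]
        have h1 : a T * d < ‖ϑ‖ + δ := by
          rw [hnorm]
          calc ‖a T • (θ' - θ)‖ = ‖(a T • (θ' - θ) - ϑ) + ϑ‖ := by rw [sub_add_cancel]
          _ ≤ ‖a T • (θ' - θ) - ϑ‖ + ‖ϑ‖ := norm_add_le _ _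
          _ < δ + ‖ϑ‖ := by linarith
          _ = ‖ϑ‖ + δ := by ring
        have hθ'b : ‖θ'‖ ≤ ‖θ0‖ + B := by
          have h2 : dist θ' θ0 ≤ B := hB hθ'
          calc ‖θ'‖ = ‖θ0 + (θ' - θ0)‖ := by rw [add_sub_cancel]
          _ ≤ ‖θ0‖ + ‖θ' - θ0‖ := norm_add_le _ _
          _ ≤ ‖θ0‖ + B := by rw [← dist_eq_norm] at *; linarith
        have hθb : ‖θ‖ ≤ C0 + d := by
          calc ‖θ‖ = ‖θ' - (θ' - θ)‖ := by rw [sub_sub_cancel]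
          _ ≤ ‖θ'‖ + ‖θ' - θ‖ := norm_sub_le _ _
          _ ≤ C0 + d := by simp only [hC0, ← hd]; linarith
        have hmax : max ‖θ‖ 1 ≤ C0 + d := max_le hθb (by linarith)
        have h2 : a T * d < K * (C0 + d) + δ := by
          have := mul_le_mul_of_nonneg_left hmax hK0
          linarith
        by_contra hcon
        push_neg at hcon
        have hAd : A * d ≤ a T * d := mul_le_mul_of_nonneg_right hTA hd0
        have hdiv : (Q / ρ) * ρ = Q := div_mul_cancel₀ _ hρ.ne'
        have hsd : (Q / ρ) * ρ ≤ (Q / ρ) * d := mul_le_mul_of_nonneg_left hcon hs0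
        have e1 : A * d = K * d + (Q / ρ) * d + d := by rw [hAdef]; ring
        have e2 : K * (C0 + d) + δ = Q + K * d := by rw [hQdef]; ring
        clear_value d A Q ρ C0
        have st1 : Q / ρ * d + d < Q := by linarith [hAd, h2, e1, e2]
        have st2 : Q ≤ Q / ρ * d := by linarith [hsd, hdiv]
        linarith [hcon, hρ, st1, st2]
      -- the main per-point bound
      have hpt : ∀ θ' ∈ Θ0,
          |upperCB Θ I J r δ a T θ' - J θ'| ≤ ε ∧ |lowerCB Θ I J r δ a T θ' - J θ'| ≤ ε := by
        intro θ' hθ'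
        set F : Set E := {θ : E | θ ∈ Θ ∧ a T • (θ' - θ) ∈ fatSublevel I θ r δ} with hF
        have hself : θ' ∈ F := by
          refine ⟨hΘ0 hθ', ?_⟩
          rw [fatSublevel, if_neg hδ.ne', mem_iUnion₂]
          refine ⟨0, ?_, ?_⟩
          · show I θ' 0 ≤ ENNReal.ofReal r
            rw [hI0 θ' (hΘ0 hθ')]
            exact zero_le
          · rw [sub_self, smul_zero]
            exact mem_ball_self hδ
        have hθ'ball : θ' ∈ closedBall θ0 (B + 1) ∩ Θ := by
          refine ⟨?_, hΘ0 hθ'⟩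
          rw [mem_closedBall]
          exact le_trans (hB hθ') (by linarith)
        have hJclose : ∀ θ ∈ F, |J θ - J θ'| < ε := by
          intro θ hθF
          have hd : ‖θ' - θ‖ < ρ := hclose θ' hθ' θ hθF
          have hθball : θ ∈ closedBall θ0 (B + 1) ∩ Θ := by
            refine ⟨?_, hθF.1⟩
            rw [mem_closedBall]
            calc dist θ θ0 ≤ dist θ θ' + dist θ' θ0 := dist_triangle _ _ _
            _ ≤ 1 + B := by
                have h1 : dist θ θ' < 1 := by
                  rw [dist_eq_norm, ← norm_neg]
                  simp only [neg_sub]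
                  exact lt_of_lt_of_le hd (min_le_right _ _)
                have h2 : dist θ' θ0 ≤ B := hB hθ'
                linarith
            _ = B + 1 := by ring
          have hdist : dist θ θ' < η := by
            rw [dist_eq_norm, ← norm_neg]
            simp only [neg_sub]
            exact lt_of_lt_of_le hd (min_le_left _ _)
          have := hηJ θ hθball θ' hθ'ball hdist
          rwa [Real.dist_eq] at this
        have hne : (J '' F).Nonempty := ⟨J θ', ⟨θ', hself, rfl⟩⟩
        have hub : ∀ y ∈ J '' F, y ≤ J θ' + ε := by
          rintro y ⟨θ, hθF, rfl⟩
          have := abs_le.mp (hJclose θ hθF).le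
          linarith [this.2]
        have hlb : ∀ y ∈ J '' F, J θ' - ε ≤ y := by
          rintro y ⟨θ, hθF, rfl⟩
          have := abs_le.mp (hJclose θ hθF).le
          linarith [this.1]
        constructor
        · have h1 : upperCB Θ I J r δ a T θ' ≤ J θ' + ε := csSup_le hne hub
          have h2 : J θ' ≤ upperCB Θ I J r δ a T θ' :=
            le_csSup ⟨J θ' + ε, hub⟩ ⟨θ', hself, rfl⟩
          rw [abs_le]
          constructor <;> [linarith; linarith]
        · have h1 : J θ' - ε ≤ lowerCB Θ I J r δ a T θ' := le_csInf hne hlb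
          have h2 : lowerCB Θ I J r δ a T θ' ≤ J θ' :=
            csInf_le ⟨J θ' - ε, hlb⟩ ⟨θ', hself, rfl⟩
          rw [abs_le]
          constructor <;> [linarith; linarith]
      exact hpt
    constructor
    · rw [Metric.tendsto_nhds]
      intro ε hε
      filter_upwards [key (ε / 2) (half_pos hε)] with T hT
      rw [Real.dist_eq, sub_zero]
      have := abs_biSup_le Θ0 (fun θ' => |upperCB Θ I J r δ a T θ' - J θ'|) (ε / 2)
        (half_pos hε).le (fun θ' h => (hT θ' h).1) (fun θ' _ => abs_nonneg _)
      exact lt_of_le_of_lt this (half_lt_self hε)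
    · rw [Metric.tendsto_nhds]
      intro ε hε
      filter_upwards [key (ε / 2) (half_pos hε)] with T hT
      rw [Real.dist_eq, sub_zero]
      have := abs_biSup_le Θ0 (fun θ' => |lowerCB Θ I J r δ a T θ' - J θ'|) (ε / 2)
        (half_pos hε).le (fun θ' h => (hT θ' h).2) (fun θ' _ => abs_nonneg _)
      exact lt_of_le_of_lt this (half_lt_self hε)
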